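/- If (1−H/2)/(3−2H) < β < 1/2, then for each q > 0, P( sup_{0≤s≤T} | ∫_{−ε_n}^{0} ∂_x f_s(1/u) u^{−3} B₃(u) du | > α_n ) = o(n^{−q}) as n → ∞. -/

import Mathlib

/- Formalization of results from "A strong convergence to the Rosenblatt process"
by J. Garzón, S. Torres and C.A. Tudor.

Conventions used throughout:
* Brownian motions are encoded by the predicates `IsTwoSidedBM` / `IsBM` below.
* Wiener integrals of `C¹` deterministic integrands and pathwise Riemann–Stieltjes
  integrals against the (piecewise linear) transport processes are both encoded via
  the integration-by-parts formula (`rsInt`), with which they coincide (a.s. in the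
  Wiener case).
* Double Wiener–Itô integrals (the processes `X^{2,H}`, `X^{3,H}` and the Rosenblatt
  process itself) are characterized as `L²(P)`-limits of their natural
  `ε`-regularizations, in which the singular kernel `(s-x)^{H/2-1}` is replaced by
  `(s+ε-x)^{H/2-1}` and the diagonal trace term is subtracted. -/

open MeasureTheory ProbabilityTheory Real Filter Set Asymptotics
open scoped ENNReal NNReal

noncomputable section

variable {Ω : Type*} [MeasurableSpace Ω]

/-- A two-sided standard Brownian motion indexed by `ℝ` on the probability space
`(Ω, P)`: it vanishes at `0`, has a.s. continuous paths, Gaussian increments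
`B t - B s ~ N(0, t-s)` for `s ≤ t`, and independent increments. -/
def IsTwoSidedBM (P : Measure Ω) (B : ℝ → Ω → ℝ) : Prop :=
  (∀ t, Measurable (B t)) ∧
  (∀ᵐ ω ∂P, B 0 ω = 0) ∧
  (∀ᵐ ω ∂P, Continuous fun t => B t ω) ∧
  (∀ s t : ℝ, s ≤ t →
    P.map (fun ω => B t ω - B s ω) = gaussianReal 0 (Real.toNNReal (t - s))) ∧
  (∀ (n : ℕ) (u : Fin (n + 1) → ℝ), Monotone u →
    iIndepFun
      (fun i : Fin n => fun ω => B (u i.succ) ω - B (u i.castSucc) ω) P)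

/-- A standard Brownian motion on `[0, ∞)` on the probability space `(Ω, P)`. -/
def IsBM (P : Measure Ω) (B : ℝ → Ω → ℝ) : Prop :=
  (∀ t, Measurable (B t)) ∧
  (∀ᵐ ω ∂P, B 0 ω = 0) ∧
  (∀ᵐ ω ∂P, ContinuousOn (fun t => B t ω) (Ici 0)) ∧
  (∀ s t : ℝ, 0 ≤ s → s ≤ t →
    P.map (fun ω => B t ω - B s ω) = gaussianReal 0 (Real.toNNReal (t - s))) ∧
  (∀ (n : ℕ) (u : Fin (n + 1) → ℝ), Monotone u → 0 ≤ u 0 →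
    iIndepFun
      (fun i : Fin n => fun ω => B (u i.succ) ω - B (u i.castSucc) ω) P)

/-- `Z` is a uniform transport process of parameter `n`: starting from `0` it moves with
velocity `±n` (the initial sign `V` being uniform on `{-1, 1}`), and it reverses its
velocity at the partial sums of an i.i.d. sequence `ξ` of exponential waiting times of
parameter `n²`, with `V` and the `ξ k` all independent. -/
def IsUniformTransport (P : Measure Ω) (n : ℕ) (Z : ℝ → Ω → ℝ) : Prop :=
  ∃ (V : Ω → ℝ) (ξ : ℕ → Ω → ℝ),
    Measurable V ∧ (∀ k, Measurable (ξ k)) ∧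
    P.map V = (1 / 2 : ℝ≥0∞) • Measure.dirac (1 : ℝ) +
      (1 / 2 : ℝ≥0∞) • Measure.dirac (-1 : ℝ) ∧
    (∀ k, P.map (ξ k) = expMeasure ((n : ℝ) ^ 2)) ∧
    iIndepFun
      (fun i : Option ℕ => Option.elim i V ξ) P ∧
    ∀ ω, ∀ t : ℝ, Z t ω =
      ∫ s in (0 : ℝ)..t, (n : ℝ) * V ω *
        (-1 : ℝ) ^ (Set.ncard {k : ℕ | ∑ j ∈ Finset.range (k + 1), ξ j ω ≤ s})

/-- The sequence `ε_n = n^{-β/(1-H/2)}`. -/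
def epsSeq (H β : ℝ) (n : ℕ) : ℝ := (n : ℝ) ^ (-(β / (1 - H / 2)))

/-- The rate `α_n = n^{-(1/2-β)} (log n)^{5/2}`. -/
def alphaRate (β : ℝ) (n : ℕ) : ℝ :=
  (n : ℝ) ^ (-(1 / 2 - β)) * Real.log n ^ ((5 : ℝ) / 2)

/-- The rate `n^{-(1/2-β-γ)} (log n)^{5/2}`. -/
def alphaRate2 (β γ : ℝ) (n : ℕ) : ℝ :=
  (n : ℝ) ^ (-(1 / 2 - β - γ)) * Real.log n ^ ((5 : ℝ) / 2)

/-- The kernel `f_s(x) = (s-x)^{H/2-1}`. -/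
def kf (H s x : ℝ) : ℝ := (s - x) ^ (H / 2 - 1)

/-- Its derivative in `x`: `∂_x f_s(x) = (1-H/2)(s-x)^{H/2-2}`. -/
def kdf (H s x : ℝ) : ℝ := (1 - H / 2) * (s - x) ^ (H / 2 - 2)

/-- Pathwise Riemann–Stieltjes integral `∫_c^d g dZ` of a `C¹` integrand `g`
(with derivative `dg`) against a path `Z`, encoded through the
integration-by-parts formula; for such integrands this coincides with the pathwise
Riemann–Stieltjes integral when `Z` is continuous of bounded variation, and a.s. with
the Wiener integral when `Z` is a Brownian path. -/
def rsInt (g dg Z : ℝ → ℝ) (c d : ℝ) : ℝ :=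
  g d * Z d - g c * Z c - ∫ x in c..d, dg x * Z x

/-- Pathwise version (via integration by parts, using `B 0 = 0` a.s. and the decay
of `f` and of `B` at `-∞`) of the Wiener integral
`Y^{1,H}_s = ∫_{-∞}^0 (s-x)^{H/2-1} dB(x)`. -/
def Y1 (H : ℝ) (B : ℝ → Ω → ℝ) (s : ℝ) (ω : Ω) : ℝ :=
  kf H s 0 * B 0 ω - ∫ x in Iic (0 : ℝ), kdf H s x * B x ω

/-- The time-inverted Brownian motion `B₃(u) = u B(1/u)` (with `B₃(0) = 0`,
automatic here since `1/0 = 0` and the prefactor vanishes). -/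
def B3 (B : ℝ → Ω → ℝ) (u : ℝ) (ω : Ω) : ℝ := u * B (1 / u) ω

/-- The approximating process `Y^{1,H,n}` built from the transport processes `Z₂, Z₃`. -/
def Y1n (H β a : ℝ) (Z₂ Z₃ : ℝ → Ω → ℝ) (n : ℕ) (s : ℝ) (ω : Ω) : ℝ :=
  kf H s a * Z₂ a ω
  - ∫ u in (1 / a)..(-(epsSeq H β n)), kdf H s (1 / u) * (u ^ 3)⁻¹ * Z₃ u ω
  + rsInt (kf H s) (kdf H s) (fun x => Z₂ x ω) a (-(epsSeq H β n))
  + rsInt (fun x => kf H s (x - epsSeq H β n)) (fun x => kdf H s (x - epsSeq H β n))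
      (fun x => Z₂ x ω) (-(epsSeq H β n)) 0

/-- Pathwise version of `∫_0^s (s+ε-x)^{H/2-1} dW(x)` (integration by parts); used
both for `Y^{3,H}` (with `W` a Brownian motion, Wiener integral) and for `Y^{3,H,n}`
(with `W` a transport process, pathwise Riemann–Stieltjes integral). -/
def Y3e (H ε : ℝ) (W : ℝ → Ω → ℝ) (s : ℝ) (ω : Ω) : ℝ :=
  rsInt (fun x => (s + ε - x) ^ (H / 2 - 1))
    (fun x => (1 - H / 2) * (s + ε - x) ^ (H / 2 - 2)) (fun x => W x ω) 0 s

/-- The strong approximation rate hypothesis (eq. (3.2) of the paper): for each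
`q > 0`, `P( sup_{t ∈ [c,d]} |X t - Z^{(n)} t| > C n^{-1/2} (log n)^{5/2} ) = o(n^{-q})`
as `n → ∞`, for some constant `C > 0`. -/
def ApproxRate (P : Measure Ω) (X : ℝ → Ω → ℝ) (Z : ℕ → ℝ → Ω → ℝ) (c d : ℝ) : Prop :=
  ∀ q : ℝ, 0 < q → ∃ C : ℝ, 0 < C ∧
    (fun n : ℕ =>
      (P {ω | C * (n : ℝ) ^ (-(1 : ℝ) / 2) * Real.log n ^ ((5 : ℝ) / 2) <
        ⨆ t ∈ Icc c d, |X t ω - Z n t ω|}).toReal)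
    =o[atTop] fun n : ℕ => (n : ℝ) ^ (-q)

/-- `X^{1,H}_t = c(H) ∫_0^t (Y^{1,H}_s)² ds`. -/
def X1 (H cH : ℝ) (B : ℝ → Ω → ℝ) (t : ℝ) (ω : Ω) : ℝ :=
  cH * ∫ s in (0 : ℝ)..t, (Y1 H B s ω) ^ 2

/-- `X^{1,H,n}_t = c(H) ∫_0^t (Y^{1,H,n}_s)² ds`. -/
def X1n (H β a cH : ℝ) (Z₂ Z₃ : ℝ → Ω → ℝ) (n : ℕ) (t : ℝ) (ω : Ω) : ℝ :=
  cH * ∫ s in (0 : ℝ)..t, (Y1n H β a Z₂ Z₃ n s ω) ^ 2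

/-- `X^{3,H,n}_t = c(H) ∫_0^t (Y^{3,H,n}_s)² ds`. -/
def X3n (H β cH : ℝ) (Z₁ : ℝ → Ω → ℝ) (n : ℕ) (t : ℝ) (ω : Ω) : ℝ :=
  cH * ∫ s in (0 : ℝ)..t, (Y3e H (epsSeq H β n) Z₁ s ω) ^ 2

/-- `X^{2,H,n}_t = c(H) ∫_0^t Y^{1,H,n}_s Y^{3,H,n}_s ds`. -/
def X2n (H β a cH : ℝ) (Z₁ Z₂ Z₃ : ℝ → Ω → ℝ) (n : ℕ) (t : ℝ) (ω : Ω) : ℝ :=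
  cH * ∫ s in (0 : ℝ)..t, Y1n H β a Z₂ Z₃ n s ω * Y3e H (epsSeq H β n) Z₁ s ω

/-- Pathwise version of the regularized Wiener integral
`Y^ε_s = ∫_{-∞}^s (s+ε-x)^{H/2-1} dB(x)` (integration by parts). -/
def Yfull (H ε : ℝ) (B : ℝ → Ω → ℝ) (s : ℝ) (ω : Ω) : ℝ :=
  ε ^ (H / 2 - 1) * B s ω - ∫ x in Iic s, (1 - H / 2) * (s + ε - x) ^ (H / 2 - 2) * B x ω

/-- `X` is (a version of) the double Wiener–Itô integral
`X^{3,H}_t = c(H) ∫_0^t∫_0^t (∫_{x₁∨x₂}^t (s-x₁)^{H/2-1}(s-x₂)^{H/2-1} ds) dB(x₁)dB(x₂)`,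
characterized as the `L²(P)`-limit, as `ε → 0⁺`, of its regularizations
`c(H) ∫_0^t [ (Y^{3,ε}_s)² - ∫_0^s (s+ε-x)^{H-2} dx ] ds`, where
`Y^{3,ε}_s = ∫_0^s (s+ε-x)^{H/2-1} dB(x)` and the subtracted term is the diagonal
trace `E[(Y^{3,ε}_s)²]`. -/
def IsX3 (P : Measure Ω) (H cH : ℝ) (B X : ℝ → Ω → ℝ) : Prop :=
  ∀ t : ℝ, 0 ≤ t → Tendsto (fun ε : ℝ =>
      ∫ ω, (cH * (∫ s in (0 : ℝ)..t,
        ((Y3e H ε B s ω) ^ 2 - ∫ x in (0 : ℝ)..s, (s + ε - x) ^ (H - 2))) - X t ω) ^ 2 ∂P)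
    (nhdsWithin 0 (Ioi 0)) (nhds 0)

/-- `X` is (a version of) the double Wiener–Itô integral
`X^{2,H}_t = c(H) ∫_{-∞}^0 ∫_0^t (∫_{x₂}^t (s-x₁)^{H/2-1}(s-x₂)^{H/2-1} ds) dB(x₂)dB(x₁)`,
characterized as the `L²(P)`-limit, as `ε → 0⁺`, of
`c(H) ∫_0^t Y^{1,H}_s Y^{3,ε}_s ds` (no trace term appears here, the two Wiener
integrals involving increments of `B` on disjoint intervals). -/
def IsX2 (P : Measure Ω) (H cH : ℝ) (B X : ℝ → Ω → ℝ) : Prop :=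
  ∀ t : ℝ, 0 ≤ t → Tendsto (fun ε : ℝ =>
      ∫ ω, (cH * (∫ s in (0 : ℝ)..t, Y1 H B s ω * Y3e H ε B s ω) - X t ω) ^ 2 ∂P)
    (nhdsWithin 0 (Ioi 0)) (nhds 0)

/-- `X` is (a version of) the Rosenblatt process
`X^H_t = c(H) ∫_ℝ∫_ℝ (∫_0^t (s-x₁)₊^{H/2-1}(s-x₂)₊^{H/2-1} ds) dB(x₁)dB(x₂)`,
characterized as the `L²(P)`-limit, as `ε → 0⁺`, of its regularizations
`c(H) ∫_0^t [ (Y^ε_s)² - ε^{H-1}/(1-H) ] ds`, where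
`Y^ε_s = ∫_{-∞}^s (s+ε-x)^{H/2-1} dB(x)` and `ε^{H-1}/(1-H) = E[(Y^ε_s)²]` is the
diagonal trace term. -/
def IsRosenblatt (P : Measure Ω) (H cH : ℝ) (B X : ℝ → Ω → ℝ) : Prop :=
  ∀ t : ℝ, 0 ≤ t → Tendsto (fun ε : ℝ =>
      ∫ ω, (cH * (∫ s in (0 : ℝ)..t,
        ((Yfull H ε B s ω) ^ 2 - ε ^ (H - 1) / (1 - H))) - X t ω) ^ 2 ∂P)
    (nhdsWithin 0 (Ioi 0)) (nhds 0)


/-! ### Auxiliary material for Lemma D1 -/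

/-- Dyadic approximation from below. -/
def dyA (k : ℕ) (t : ℝ) : ℝ := (⌊t * 2 ^ k⌋ : ℤ) / 2 ^ k

lemma tendsto_dyA (t : ℝ) : Tendsto (fun k => dyA k t) atTop (nhds t) := by
  have h2 : ∀ k : ℕ, (0:ℝ) < 2 ^ k := fun k => by positivity
  have hle : ∀ k, dyA k t ≤ t := fun k => by
    rw [dyA, div_le_iff₀ (h2 k)]
    exact Int.floor_le _
  have hge : ∀ k, t - ((2:ℝ) ^ k)⁻¹ ≤ dyA k t := fun k => by
    rw [dyA, le_div_iff₀ (h2 k), sub_mul, inv_mul_cancel₀ (h2 k).ne']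
    exact (Int.sub_one_lt_floor _).le
  have hl : Tendsto (fun k : ℕ => t - ((2:ℝ) ^ k)⁻¹) atTop (nhds t) := by
    have : Tendsto (fun k : ℕ => ((2:ℝ) ^ k)⁻¹) atTop (nhds 0) := by
      exact tendsto_inv_atTop_zero.comp
        (tendsto_pow_atTop_atTop_of_one_lt (by norm_num : (1:ℝ) < 2))
    simpa using tendsto_const_nhds.sub this
  exact tendsto_of_tendsto_of_tendsto_of_le_of_le hl tendsto_const_nhds hge hle

/-- Jointly measurable version of `(t, ω) ↦ ‖B t ω‖₊`. -/
def Fme (B : ℝ → Ω → ℝ) : ℝ × Ω → ℝ≥0∞ :=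
  fun p => Filter.limsup (fun k : ℕ => (‖B (dyA k p.1) p.2‖₊ : ℝ≥0∞)) atTop

lemma measurable_Fme (B : ℝ → Ω → ℝ) (hB : ∀ t, Measurable (B t)) :
    Measurable (Fme B) := by
  have key : ∀ k : ℕ, Measurable (fun p : ℝ × Ω => (‖B (dyA k p.1) p.2‖₊ : ℝ≥0∞)) := by
    intro k
    have h1 : Measurable (fun q : Ω × ℤ => (‖B ((q.2 : ℝ) / 2 ^ k) q.1‖₊ : ℝ≥0∞)) :=
      measurable_from_prod_countable_left fun m =>
        (hB ((m : ℝ) / 2 ^ k)).nnnorm.coe_nnreal_ennreal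
    have h2 : Measurable (fun p : ℝ × Ω => (p.2, ⌊p.1 * 2 ^ k⌋)) :=
      measurable_snd.prodMk (Int.measurable_floor.comp (measurable_fst.mul_const _))
    have := h1.comp h2
    simpa [dyA, Function.comp_def] using this
  unfold Fme
  exact Measurable.limsup key

lemma Fme_eq (B : ℝ → Ω → ℝ) {ω : Ω} (hc : Continuous fun t => B t ω) (t : ℝ) :
    Fme B (t, ω) = (‖B t ω‖₊ : ℝ≥0∞) := by
  have h : Tendsto (fun k : ℕ => (‖B (dyA k t) ω‖₊ : ℝ≥0∞)) atTop
      (nhds (‖B t ω‖₊ : ℝ≥0∞)) := by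
    have h0 : Tendsto (fun k => dyA k t) atTop (nhds t) := tendsto_dyA t
    exact (ENNReal.continuous_coe.tendsto _).comp
      ((continuous_nnnorm.tendsto _).comp ((hc.tendsto t).comp h0))
  exact h.limsup_eq

lemma point_bound_real (H s u b : ℝ) (hH : 1 / 2 < H) (hH' : H < 1)
    (hs : 0 ≤ s) (hu : u < 0) :
    |kdf H s (1 / u) * (u ^ 3)⁻¹ * (u * b)| ≤
      (1 - H / 2) * |u| ^ (-((H + 1) / 2)) * (|u| ^ ((1:ℝ) / 2) * |b|) := by
  have hx : (0:ℝ) < |u| := abs_pos.2 hu.ne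
  have hiu : 1 / u < 0 := one_div_neg.2 hu
  have hbase : 0 < s - 1 / u := by linarith
  have hcH : (0:ℝ) < 1 - H / 2 := by linarith
  have hneg : -(1 / u) = |u|⁻¹ := by
    rw [abs_of_neg hu, one_div, inv_neg]
  have step1 : (s - 1 / u) ^ (H / 2 - 2) ≤ |u| ^ (2 - H / 2) := by
    have h1 : (s - 1 / u) ^ (H / 2 - 2) ≤ (-(1 / u)) ^ (H / 2 - 2) :=
      Real.rpow_le_rpow_of_nonpos (by linarith) (by linarith) (by linarith)
    have h2 : (-(1 / u)) ^ (H / 2 - 2) = |u| ^ (2 - H / 2) := by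
      rw [hneg, ← Real.rpow_neg_one |u|, ← Real.rpow_mul hx.le]
      norm_num
    linarith [h1, h2.le, h2.ge]
  have hLHS : |kdf H s (1 / u) * (u ^ 3)⁻¹ * (u * b)| =
      (1 - H / 2) * (s - 1 / u) ^ (H / 2 - 2) * ((|u| ^ 3)⁻¹ * (|u| * |b|)) := by
    rw [abs_mul, abs_mul, abs_mul, abs_inv, abs_pow]
    rw [kdf, abs_mul, abs_of_pos hcH, abs_of_pos (Real.rpow_pos_of_pos hbase _)]
    ring
  rw [hLHS]
  have e1 : ((|u| ^ 3 : ℝ))⁻¹ = |u| ^ (-(3:ℝ)) := by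
    rw [← Real.rpow_natCast |u| 3, ← Real.rpow_neg hx.le]; norm_num
  have hpoweq : |u| ^ (2 - H / 2) * ((|u| ^ 3)⁻¹ * |u|) =
      |u| ^ (-((H + 1) / 2)) * |u| ^ ((1:ℝ) / 2) := by
    rw [e1]
    nth_rewrite 3 [← Real.rpow_one |u|]
    rw [← Real.rpow_add hx, ← Real.rpow_add hx, ← Real.rpow_add hx]
    congr 1; ring
  calc (1 - H / 2) * (s - 1 / u) ^ (H / 2 - 2) * ((|u| ^ 3)⁻¹ * (|u| * |b|))
      ≤ (1 - H / 2) * |u| ^ (2 - H / 2) * ((|u| ^ 3)⁻¹ * (|u| * |b|)) := by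
        apply mul_le_mul_of_nonneg_right (mul_le_mul_of_nonneg_left step1 hcH.le)
        positivity
    _ = (1 - H / 2) * (|u| ^ (2 - H / 2) * ((|u| ^ 3)⁻¹ * |u|)) * |b| := by ring
    _ = (1 - H / 2) * |u| ^ (-((H + 1) / 2)) * (|u| ^ ((1:ℝ) / 2) * |b|) := by
        rw [hpoweq]; ring

lemma point_bound (H s u b : ℝ) (hH : 1 / 2 < H) (hH' : H < 1)
    (hs : 0 ≤ s) (hu : u < 0) :
    (‖kdf H s (1 / u) * (u ^ 3)⁻¹ * (u * b)‖₊ : ℝ≥0∞) ≤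
      ENNReal.ofReal ((1 - H / 2) * |u| ^ (-((H + 1) / 2))) *
        (ENNReal.ofReal (|u| ^ ((1:ℝ) / 2)) * (‖b‖₊ : ℝ≥0∞)) := by
  rw [← enorm_eq_nnnorm, ← enorm_eq_nnnorm, Real.enorm_eq_ofReal_abs, Real.enorm_eq_ofReal_abs]
  rw [← ENNReal.ofReal_mul (Real.rpow_nonneg (abs_nonneg u) _),
    ← ENNReal.ofReal_mul (mul_nonneg (by linarith) (Real.rpow_nonneg (abs_nonneg u) _))]
  exact ENNReal.ofReal_le_ofReal (point_bound_real H s u b hH hH' hs hu)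

lemma Zcalc {c ε r : ℝ} (hc : 0 ≤ c) (hε : 0 < ε) (hr0 : 0 < r) (hr1 : r < 1) :
    ∫⁻ u in Ioo (-ε) 0, ENNReal.ofReal (c * |u| ^ (-r)) =
      ENNReal.ofReal (c / (1 - r) * ε ^ (1 - r)) := by
  have hmp : MeasurePreserving (Neg.neg : ℝ → ℝ) volume volume :=
    Measure.measurePreserving_neg _
  have hpre : (Neg.neg : ℝ → ℝ) ⁻¹' (Ioo 0 ε) = Ioo (-ε) 0 := by
    ext x
    simp only [mem_preimage, mem_Ioo]
    constructor <;> rintro ⟨h1, h2⟩ <;> constructor <;> linarith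
  have key := hmp.setLIntegral_comp_preimage_emb (Homeomorph.neg ℝ).measurableEmbedding
    (fun v => ENNReal.ofReal (c * |v| ^ (-r))) (Ioo 0 ε)
  rw [hpre] at key
  simp only [abs_neg] at key
  rw [key]
  have hcong : ∫⁻ v in Ioo 0 ε, ENNReal.ofReal (c * |v| ^ (-r)) =
      ∫⁻ v in Ioo 0 ε, ENNReal.ofReal (c * v ^ (-r)) := by
    apply setLIntegral_congr_fun measurableSet_Ioo
    exact fun v hv => by rw [abs_of_pos hv.1]
  rw [hcong]
  have hint : IntegrableOn (fun v : ℝ => c * v ^ (-r)) (Ioo 0 ε) volume := by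
    have h1 : IntervalIntegrable (fun x : ℝ => x ^ (-r)) volume 0 ε :=
      intervalIntegral.intervalIntegrable_rpow' (by linarith)
    have h2 : IntegrableOn (fun x : ℝ => x ^ (-r)) (Ioc 0 ε) volume :=
      (intervalIntegrable_iff_integrableOn_Ioc_of_le hε.le).mp h1
    exact (h2.mono_set Ioo_subset_Ioc_self).const_mul c
  rw [← ofReal_integral_eq_lintegral_ofReal hint]
  · congr 1
    rw [integral_const_mul, ← MeasureTheory.integral_Ioc_eq_integral_Ioo,
      ← intervalIntegral.integral_of_le hε.le,
      integral_rpow (Or.inl (by linarith : (-1:ℝ) < -r)),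
      Real.zero_rpow (by linarith : -r + 1 ≠ 0)]
    have hre : -r + 1 = 1 - r := by ring
    rw [hre]
    field_simp
    rw [sub_zero]
  · refine (ae_restrict_iff' measurableSet_Ioo).2 (ae_of_all _ fun v hv => ?_)
    exact mul_nonneg hc (Real.rpow_nonneg hv.1.le _)

lemma integrable_abs_rpow_mul_exp_neg_mul_sq {b : ℝ} (hb : 0 < b) {s : ℝ} (hs : -1 < s) :
    Integrable fun x : ℝ => |x| ^ s * rexp (-b * x ^ 2) := by
  have base : IntegrableOn (fun x : ℝ => |x| ^ s * rexp (-b * x ^ 2)) (Ioi 0) :=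
    (integrableOn_rpow_mul_exp_neg_mul_sq hb hs).congr_fun
      (fun x hx => by rw [abs_of_pos hx]) measurableSet_Ioi
  rw [← integrableOn_univ, ← @Iio_union_Ici _ _ (0 : ℝ), integrableOn_union,
    integrableOn_Ici_iff_integrableOn_Ioi]
  refine ⟨?_, base⟩
  rw [← (Measure.measurePreserving_neg (volume : Measure ℝ)).integrableOn_comp_preimage
      (Homeomorph.neg ℝ).measurableEmbedding]
  simp only [Function.comp_def, neg_sq, neg_preimage, neg_Iio, neg_neg, neg_zero, abs_neg]
  exact base

/-- `p`-th absolute moment of the standard Gaussian. -/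
def Mgauss (p : ℝ) : ℝ≥0∞ := ∫⁻ x, (‖x‖₊ : ℝ≥0∞) ^ p ∂(gaussianReal 0 1)

lemma Mgauss_ne_top {p : ℝ} (hp : 0 ≤ p) : Mgauss p ≠ ⊤ := by
  have h1 : gaussianReal 0 1 = volume.withDensity (gaussianPDF 0 1) :=
    gaussianReal_of_var_ne_zero 0 one_ne_zero
  have hmeas : Measurable fun x : ℝ => (‖x‖₊ : ℝ≥0∞) ^ p :=
    (measurable_nnnorm.coe_nnreal_ennreal).pow_const p
  rw [Mgauss, h1, lintegral_withDensity_eq_lintegral_mul _ (measurable_gaussianPDF 0 1) hmeas]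
  have heq : ∀ a : ℝ, gaussianPDF 0 1 a * (‖a‖₊ : ℝ≥0∞) ^ p =
      ENNReal.ofReal (gaussianPDFReal 0 1 a * |a| ^ p) := by
    intro x
    rw [gaussianPDF, ENNReal.ofReal_mul (gaussianPDFReal_nonneg 0 1 x)]
    congr 1
    rw [← enorm_eq_nnnorm, Real.enorm_eq_ofReal_abs, ← ENNReal.ofReal_rpow_of_nonneg (abs_nonneg x) hp]
  simp only [Pi.mul_apply]
  rw [lintegral_congr heq]
  have hInt : Integrable fun x : ℝ => gaussianPDFReal 0 1 x * |x| ^ p := by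
    have h2 : Integrable fun x : ℝ => |x| ^ p * rexp (-2⁻¹ * x ^ 2) :=
      integrable_abs_rpow_mul_exp_neg_mul_sq (by norm_num) (by linarith)
    have h3 : ∀ x : ℝ, gaussianPDFReal 0 1 x * |x| ^ p =
        (Real.sqrt (2 * π))⁻¹ * (|x| ^ p * rexp (-2⁻¹ * x ^ 2)) := by
      intro x
      rw [gaussianPDFReal]
      push_cast
      rw [mul_one, sub_zero]
      rw [show -x ^ 2 / (2 * 1) = -2⁻¹ * x ^ 2 by ring]
      ring
    rw [funext h3]
    exact h2.const_mul _
  have := (hasFiniteIntegral_iff_ofReal (ae_of_all _ fun x =>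
    mul_nonneg (gaussianPDFReal_nonneg 0 1 x) (Real.rpow_nonneg (abs_nonneg x) p))).1 hInt.2
  exact this.ne

lemma moment_aux (P : Measure Ω) (Y : Ω → ℝ)
    (hY : Measurable Y) (v : ℝ≥0) (hmap : P.map Y = gaussianReal 0 v)
    (c : ℝ) (hc : 0 < c) (hcv : c ^ 2 * (v : ℝ) = 1) (p : ℝ) :
    ∫⁻ ω, (ENNReal.ofReal c * (‖Y ω‖₊ : ℝ≥0∞)) ^ p ∂P = Mgauss p := by
  have hφ : Measurable fun x : ℝ => (ENNReal.ofReal c * (‖x‖₊ : ℝ≥0∞)) ^ p :=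
    ((measurable_const.mul (measurable_nnnorm.coe_nnreal_ennreal)).pow_const p)
  have h1 : ∫⁻ ω, (ENNReal.ofReal c * (‖Y ω‖₊ : ℝ≥0∞)) ^ p ∂P =
      ∫⁻ x, (ENNReal.ofReal c * (‖x‖₊ : ℝ≥0∞)) ^ p ∂(gaussianReal 0 v) := by
    rw [← hmap, lintegral_map hφ hY]
  have hv : v = NNReal.mk (c⁻¹ ^ 2) (sq_nonneg _) * 1 := by
    ext
    push_cast
    rw [mul_one]
    field_simp
    nlinarith [hcv]
  have h2 : gaussianReal 0 v = (gaussianReal 0 1).map (c⁻¹ * ·) := by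
    rw [gaussianReal_map_const_mul c⁻¹, mul_zero, ← hv]
  rw [h1, h2, lintegral_map hφ (measurable_const_mul _)]
  unfold Mgauss
  apply lintegral_congr
  intro x
  have hnn : (‖c⁻¹ * x‖₊ : ℝ≥0∞) = ENNReal.ofReal c⁻¹ * (‖x‖₊ : ℝ≥0∞) := by
    rw [nnnorm_mul, ENNReal.coe_mul, ← enorm_eq_nnnorm c⁻¹, Real.enorm_eq_ofReal (by positivity)]
  rw [hnn, ← mul_assoc, ← ENNReal.ofReal_mul hc.le, mul_inv_cancel₀ hc.ne',
    ENNReal.ofReal_one, one_mul]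


/-- Lemma D1. -/
theorem lemma_D1
    (P : Measure Ω) [IsProbabilityMeasure P]
    (H T a β : ℝ) (hH : 1 / 2 < H) (hH' : H < 1) (hT : 0 < T) (ha : a < 0)
    (hβl : (1 - H / 2) / (3 - 2 * H) < β) (hβr : β < 1 / 2)
    (B : ℝ → Ω → ℝ) (hB : IsTwoSidedBM P B) :
    ∀ q : ℝ, 0 < q →
      (fun n : ℕ => (P {ω | alphaRate β n <
          ⨆ s ∈ Icc (0 : ℝ) T,
            |∫ u in (-(epsSeq H β n))..(0 : ℝ),
              kdf H s (1 / u) * (u ^ 3)⁻¹ * B3 B u ω|}).toReal)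
      =o[atTop] fun n : ℕ => (n : ℝ) ^ (-q) := by
  obtain ⟨hBmeas, hB0, hBcont, hBlaw, -⟩ := hB
  intro q hq
  have hcH : (0:ℝ) < 1 - H / 2 := by linarith
  have hr0 : (0:ℝ) < (H + 1) / 2 := by linarith
  have hr1 : (H + 1) / 2 < 1 := by linarith
  set C : ℝ := (1 - H / 2) / (1 - (H + 1) / 2) with hC_def
  have hC : 0 < C := div_pos hcH (by linarith)
  have h2H : (0:ℝ) < 2 - H := by linarith
  set θ : ℝ := β * (1 - H) / (2 - H) - (1 / 2 - β) with hθ_def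
  have hθ : 0 < θ := by
    rw [hθ_def, sub_pos, lt_div_iff₀ h2H]
    have h3 : (0:ℝ) < 3 - 2 * H := by linarith
    have hb := (div_lt_iff₀ h3).1 hβl
    nlinarith
  set p : ℝ := max 2 (q / θ + 1) with hp_def
  have hp1 : (1:ℝ) < p := lt_of_lt_of_le one_lt_two (le_max_left _ _)
  have hp0 : (0:ℝ) ≤ p := by linarith
  have hpθ : q < θ * p := by
    have h1 : q / θ + 1 ≤ p := le_max_right _ _
    have h2 : q / θ < p := by linarith
    calc q = q / θ * θ := by field_simp
    _ < p * θ := mul_lt_mul_of_pos_right h2 hθ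
    _ = θ * p := mul_comm _ _
  have hFmeas := measurable_Fme B hBmeas
  set g : ℝ → ℝ≥0∞ := fun u => ENNReal.ofReal ((1 - H / 2) * |u| ^ (-((H + 1) / 2)))
    with hg_def
  have hgmeas : Measurable g := by
    rw [hg_def]; fun_prop
  set X : ℝ × Ω → ℝ≥0∞ :=
    fun v => ENNReal.ofReal (|v.1| ^ ((1:ℝ) / 2)) * Fme B (1 / v.1, v.2) with hX_def
  have hXmeas : Measurable X := by
    rw [hX_def]
    apply Measurable.mul
    · fun_prop
    · exact hFmeas.comp ((measurable_const.div measurable_fst).prodMk measurable_snd)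
  set L : ℕ → Ω → ℝ≥0∞ :=
    fun n ω => ∫⁻ u in Ioo (-(epsSeq H β n)) 0, g u * X (u, ω) with hL_def
  have hLmeas : ∀ n, Measurable (L n) := by
    intro n
    have h : Measurable fun z : Ω × ℝ => g z.2 * X (z.2, z.1) :=
      (hgmeas.comp measurable_snd).mul (hXmeas.comp (measurable_snd.prodMk measurable_fst))
    exact h.lintegral_prod_right'
  have hXsec : ∀ ω, Measurable fun u => X (u, ω) :=
    fun ω => hXmeas.comp (measurable_id.prodMk measurable_const)
  have hgood : ∀ᵐ ω ∂P, B 0 ω = 0 ∧ Continuous fun t => B t ω := hB0.and hBcont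
  -- the key quantitative estimate
  have key : ∀ n : ℕ, 2 ≤ n →
      (P {ω | alphaRate β n < ⨆ s ∈ Icc (0 : ℝ) T,
          |∫ u in (-(epsSeq H β n))..(0 : ℝ),
            kdf H s (1 / u) * (u ^ 3)⁻¹ * B3 B u ω|}).toReal ≤
        (Mgauss p).toReal *
          (C * epsSeq H β n ^ (1 - (H + 1) / 2) / alphaRate β n) ^ p := by
    intro n hn
    have hnpos : (0:ℝ) < n := by
      have : (2:ℝ) ≤ n := by exact_mod_cast hn
      linarith
    set ε := epsSeq H β n with hε_def
    have hε : 0 < ε := Real.rpow_pos_of_pos hnpos _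
    have hα : 0 < alphaRate β n := by
      apply mul_pos (Real.rpow_pos_of_pos hnpos _)
      apply Real.rpow_pos_of_pos
      apply Real.log_pos
      have : (2:ℝ) ≤ n := by exact_mod_cast hn
      linarith
    set A := ENNReal.ofReal (alphaRate β n) with hA_def
    have hA0 : A ≠ 0 := (ENNReal.ofReal_pos.2 hα).ne'
    have hAtop : A ≠ ⊤ := ENNReal.ofReal_ne_top
    set Zr : ℝ := C * ε ^ (1 - (H + 1) / 2) with hZr_def
    have hZr : 0 < Zr := mul_pos hC (Real.rpow_pos_of_pos hε _)
    set Z := ENNReal.ofReal Zr with hZ_def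
    have hZ0 : Z ≠ 0 := (ENNReal.ofReal_pos.2 hZr).ne'
    have hZtop : Z ≠ ⊤ := ENNReal.ofReal_ne_top
    have hZcalc : ∫⁻ u in Ioo (-ε) 0, g u = Z := by
      rw [hg_def, hZ_def, hZr_def, hC_def]
      exact Zcalc hcH.le hε hr0 hr1
    -- pathwise domination: the event is (up to a null set) inside `{A < L n}`
    have hsub : {ω | alphaRate β n < ⨆ s ∈ Icc (0 : ℝ) T,
          |∫ u in (-ε)..(0:ℝ), kdf H s (1 / u) * (u ^ 3)⁻¹ * B3 B u ω|} ⊆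
        {ω | A < L n ω} ∪ {ω | ¬(B 0 ω = 0 ∧ Continuous fun t => B t ω)} := by
      intro ω hω
      by_cases hgd : B 0 ω = 0 ∧ Continuous fun t => B t ω
      swap
      · exact Or.inr hgd
      left
      have hcnt := hgd.2
      have hptw : ∀ s, s ∈ Icc (0:ℝ) T →
          (∫⁻ u in Ioc (-ε) 0,
            (‖kdf H s (1 / u) * (u ^ 3)⁻¹ * B3 B u ω‖₊ : ℝ≥0∞)) ≤ L n ω := by
        intro s hs
        rw [← setLIntegral_congr Ioo_ae_eq_Ioc]
        apply setLIntegral_mono (hgmeas.mul (hXsec ω))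
        intro u hu
        have hu0 : u < 0 := hu.2
        have hfme : Fme B (1 / u, ω) = (‖B (1 / u) ω‖₊ : ℝ≥0∞) := Fme_eq B hcnt _
        calc (‖kdf H s (1 / u) * (u ^ 3)⁻¹ * B3 B u ω‖₊ : ℝ≥0∞)
            = (‖kdf H s (1 / u) * (u ^ 3)⁻¹ * (u * B (1 / u) ω)‖₊ : ℝ≥0∞) := rfl
          _ ≤ ENNReal.ofReal ((1 - H / 2) * |u| ^ (-((H + 1) / 2))) *
              (ENNReal.ofReal (|u| ^ ((1:ℝ) / 2)) * (‖B (1 / u) ω‖₊ : ℝ≥0∞)) :=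
            point_bound H s u _ hH hH' hs.1 hu0
          _ = g u * X (u, ω) := by simp only [hg_def, hX_def]; rw [hfme]
      by_cases hLtop : L n ω = ⊤
      · show A < L n ω
        rw [hLtop, hA_def]
        exact ENNReal.ofReal_lt_top
      · have hsup : (⨆ s ∈ Icc (0:ℝ) T,
            |∫ u in (-ε)..(0:ℝ), kdf H s (1 / u) * (u ^ 3)⁻¹ * B3 B u ω|) ≤
              (L n ω).toReal := by
          apply Real.iSup_le _ ENNReal.toReal_nonneg
          intro s
          apply Real.iSup_le _ ENNReal.toReal_nonneg
          intro hs
          have h1 : |∫ u in (-ε)..(0:ℝ), kdf H s (1 / u) * (u ^ 3)⁻¹ * B3 B u ω| ≤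
              (∫⁻ u in Ioc (-ε) 0,
                (‖kdf H s (1 / u) * (u ^ 3)⁻¹ * B3 B u ω‖₊ : ℝ≥0∞)).toReal := by
            rw [intervalIntegral.integral_of_le (by linarith : -ε ≤ (0:ℝ)),
              ← Real.norm_eq_abs]
            simp only [← enorm_eq_nnnorm, ← ofReal_norm]
            exact norm_integral_le_lintegral_norm _
          exact h1.trans (ENNReal.toReal_mono hLtop (hptw s hs))
        have hlt : alphaRate β n < (L n ω).toReal := lt_of_lt_of_le hω hsup
        show A < L n ω
        rw [hA_def, ← ENNReal.ofReal_toReal hLtop]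
        exact (ENNReal.ofReal_lt_ofReal_iff_of_nonneg hα.le).2 hlt
    have hPev : P {ω | alphaRate β n < ⨆ s ∈ Icc (0 : ℝ) T,
          |∫ u in (-ε)..(0:ℝ), kdf H s (1 / u) * (u ^ 3)⁻¹ * B3 B u ω|} ≤
        P {ω | A < L n ω} := by
      calc P _ ≤ P ({ω | A < L n ω} ∪
            {ω | ¬(B 0 ω = 0 ∧ Continuous fun t => B t ω)}) := measure_mono hsub
      _ ≤ P {ω | A < L n ω} +
            P {ω | ¬(B 0 ω = 0 ∧ Continuous fun t => B t ω)} := measure_union_le _ _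
      _ = P {ω | A < L n ω} := by
            rw [ae_iff.1 hgood, add_zero]
    -- Markov / Chebyshev
    have hApow0 : A ^ p ≠ 0 := by
      simp only [ne_eq, ENNReal.rpow_eq_zero_iff, not_or]
      exact ⟨fun h => hA0 h.1, fun h => hAtop h.1⟩
    have hApowtop : A ^ p ≠ ⊤ := ENNReal.rpow_ne_top_of_nonneg hp0 hAtop
    have hmark : P {ω | A < L n ω} ≤ (∫⁻ ω, L n ω ^ p ∂P) / A ^ p := by
      have hsub2 : {ω | A < L n ω} ⊆ {ω | A ^ p ≤ L n ω ^ p} :=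
        fun ω hω => ENNReal.rpow_le_rpow (le_of_lt hω) hp0
      have h2 := mul_meas_ge_le_lintegral₀ (μ := P) ((hLmeas n).pow_const p).aemeasurable (A ^ p)
      rw [ENNReal.le_div_iff_mul_le (Or.inl hApow0) (Or.inl hApowtop)]
      calc P {ω | A < L n ω} * A ^ p ≤ P {ω | A ^ p ≤ L n ω ^ p} * A ^ p :=
            mul_le_mul_left (measure_mono hsub2) _
      _ = A ^ p * P {ω | A ^ p ≤ L n ω ^ p} := mul_comm _ _
      _ ≤ ∫⁻ ω, L n ω ^ p ∂P := h2
    -- moment bound via Hölder and Tonelli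
    have hmom : (∫⁻ ω, L n ω ^ p ∂P) ≤ Mgauss p * Z ^ p := by
      set μg := (volume.restrict (Ioo (-ε) 0)).withDensity g with hμg_def
      have hμguniv : μg univ = Z := by
        rw [hμg_def, withDensity_apply _ MeasurableSet.univ, Measure.restrict_univ]
        exact hZcalc
      have hfinμg : IsFiniteMeasure μg := ⟨by rw [hμguniv]; exact ENNReal.ofReal_lt_top⟩
      have hLrw : ∀ ω, L n ω = ∫⁻ u, X (u, ω) ∂μg := by
        intro ω
        rw [hL_def, hμg_def, lintegral_withDensity_eq_lintegral_mul _ hgmeas (hXsec ω)]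
        rfl
      have hq' : p.HolderConjugate (Real.conjExponent p) :=
        Real.HolderConjugate.conjExponent hp1
      have hqp : 1 / Real.conjExponent p * p = p - 1 := by
        rw [Real.conjExponent]
        have hp0' : p ≠ 0 := by linarith
        have hp1' : p - 1 ≠ 0 := sub_ne_zero.2 hp1.ne'
        field_simp
      have hHold : ∀ ω, L n ω ^ p ≤ (∫⁻ u, X (u, ω) ^ p ∂μg) * Z ^ (p - 1) := by
        intro ω
        have h1 : ∫⁻ u, X (u, ω) ∂μg ≤
            (∫⁻ u, X (u, ω) ^ p ∂μg) ^ (1 / p) *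
              Z ^ (1 / Real.conjExponent p) := by
          have h2 := ENNReal.lintegral_mul_le_Lp_mul_Lq μg hq'
            (hXsec ω).aemeasurable (aemeasurable_const (b := (1:ℝ≥0∞)))
          simp only [Pi.mul_apply, mul_one, ENNReal.one_rpow, lintegral_one,
            hμguniv] at h2
          exact h2
        calc L n ω ^ p = (∫⁻ u, X (u, ω) ∂μg) ^ p := by rw [hLrw]
        _ ≤ ((∫⁻ u, X (u, ω) ^ p ∂μg) ^ (1 / p) *
              Z ^ (1 / Real.conjExponent p)) ^ p := ENNReal.rpow_le_rpow h1 hp0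
        _ = (∫⁻ u, X (u, ω) ^ p ∂μg) * Z ^ (p - 1) := by
            rw [ENNReal.mul_rpow_of_nonneg _ _ hp0, ← ENNReal.rpow_mul,
              ← ENNReal.rpow_mul, hqp,
              show 1 / p * p = 1 by field_simp, ENNReal.rpow_one]
      have hinner : Measurable fun ω => ∫⁻ u, X (u, ω) ^ p ∂μg :=
        ((hXmeas.comp (measurable_snd.prodMk measurable_fst)).pow_const
          p).lintegral_prod_right'
      have hfiber : ∀ u, u ∈ Ioo (-ε) 0 → ∫⁻ ω, X (u, ω) ^ p ∂P = Mgauss p := by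
        intro u hu
        have hu0 : u < 0 := hu.2
        have hx : (0:ℝ) < |u| := abs_pos.2 hu0.ne
        have hae2 : ∀ᵐ ω ∂P, X (u, ω) ^ p =
            (ENNReal.ofReal (|u| ^ ((1:ℝ) / 2)) *
              (‖B 0 ω - B (1 / u) ω‖₊ : ℝ≥0∞)) ^ p := by
          filter_upwards [hB0, hBcont] with ω h0 hcont
          rw [hX_def]
          simp only
          rw [Fme_eq B hcont, h0, zero_sub, nnnorm_neg]
        rw [lintegral_congr_ae hae2]
        have hc2 : (|u| ^ ((1:ℝ) / 2)) ^ 2 * (((0 - 1 / u).toNNReal : ℝ≥0) : ℝ) = 1 := by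
          have hvv : (((0 - 1 / u).toNNReal : ℝ≥0) : ℝ) = |u|⁻¹ := by
            rw [Real.coe_toNNReal]
            · rw [zero_sub, abs_of_neg hu0, one_div, inv_neg]
            · rw [zero_sub]
              have : 1 / u < 0 := one_div_neg.2 hu0
              linarith
          rw [hvv, ← Real.rpow_natCast (|u| ^ ((1:ℝ)/2)) 2, ← Real.rpow_mul hx.le]
          push_cast
          rw [show (1:ℝ) / 2 * 2 = 1 by norm_num, Real.rpow_one]
          exact mul_inv_cancel₀ hx.ne'
        exact moment_aux P (fun ω => B 0 ω - B (1 / u) ω)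
          ((hBmeas 0).sub (hBmeas (1 / u))) _
          (hBlaw (1 / u) 0 (le_of_lt (one_div_neg.2 hu0)))
          (|u| ^ ((1:ℝ) / 2)) (Real.rpow_pos_of_pos hx _) hc2 p
      calc ∫⁻ ω, L n ω ^ p ∂P
          ≤ ∫⁻ ω, (∫⁻ u, X (u, ω) ^ p ∂μg) * Z ^ (p - 1) ∂P := lintegral_mono hHold
      _ = (∫⁻ ω, ∫⁻ u, X (u, ω) ^ p ∂μg ∂P) * Z ^ (p - 1) :=
            lintegral_mul_const'' _ hinner.aemeasurable
      _ = (∫⁻ u, ∫⁻ ω, X (u, ω) ^ p ∂P ∂μg) * Z ^ (p - 1) := by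
            congr 1
            exact lintegral_lintegral_swap
              ((hXmeas.comp (measurable_snd.prodMk measurable_fst)).pow_const
                p).aemeasurable
      _ ≤ (∫⁻ _, Mgauss p ∂μg) * Z ^ (p - 1) := by
            apply mul_le_mul_left
            apply lintegral_mono_ae
            have h0 : ∀ᵐ u ∂(volume.restrict (Ioo (-ε) 0)), u ∈ Ioo (-ε) 0 :=
              ae_restrict_mem measurableSet_Ioo
            have habs : μg ≪ volume.restrict (Ioo (-ε) 0) :=
              withDensity_absolutelyContinuous _ _
            filter_upwards [h0.filter_mono habs.ae_le] with u hu
            rw [hfiber u hu]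
      _ = Mgauss p * Z * Z ^ (p - 1) := by
            rw [lintegral_const, hμguniv]
      _ = Mgauss p * Z ^ p := by
            rw [mul_assoc]
            congr 1
            nth_rewrite 1 [← ENNReal.rpow_one Z]
            rw [← ENNReal.rpow_add _ _ hZ0 hZtop]
            congr 1
            ring
    -- put everything together
    have hne : (Mgauss p * Z ^ p) / A ^ p ≠ ⊤ := by
      apply (ENNReal.div_lt_top _ hApow0).ne
      exact ENNReal.mul_ne_top (Mgauss_ne_top hp0)
        (ENNReal.rpow_ne_top_of_nonneg hp0 hZtop)
    calc (P {ω | alphaRate β n < ⨆ s ∈ Icc (0 : ℝ) T,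
          |∫ u in (-ε)..(0:ℝ), kdf H s (1 / u) * (u ^ 3)⁻¹ * B3 B u ω|}).toReal
        ≤ ((Mgauss p * Z ^ p) / A ^ p).toReal := by
          apply ENNReal.toReal_mono hne
          exact hPev.trans (hmark.trans (ENNReal.div_le_div_right hmom _))
      _ = (Mgauss p).toReal * Zr ^ p / alphaRate β n ^ p := by
          rw [ENNReal.toReal_div, ENNReal.toReal_mul, ← ENNReal.toReal_rpow,
            ← ENNReal.toReal_rpow, hZ_def, hA_def, ENNReal.toReal_ofReal hZr.le,
            ENNReal.toReal_ofReal hα.le]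
      _ = (Mgauss p).toReal * (Zr / alphaRate β n) ^ p := by
          rw [Real.div_rpow hZr.le hα.le, mul_div_assoc]
      _ = (Mgauss p).toReal * (C * ε ^ (1 - (H + 1) / 2) / alphaRate β n) ^ p := by
          rw [hZr_def]
  -- asymptotic comparison
  have hbig : ∀ᶠ n : ℕ in atTop,
      ‖(P {ω | alphaRate β n < ⨆ s ∈ Icc (0 : ℝ) T,
          |∫ u in (-(epsSeq H β n))..(0 : ℝ),
            kdf H s (1 / u) * (u ^ 3)⁻¹ * B3 B u ω|}).toReal‖ ≤
        ((Mgauss p).toReal * C ^ p) * ‖(n:ℝ) ^ (-(θ * p))‖ := by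
    filter_upwards [eventually_ge_atTop 3] with n hn
    have hn2 : 2 ≤ n := by omega
    have hnpos : (0:ℝ) < n := by
      have : (3:ℝ) ≤ n := by exact_mod_cast hn
      linarith
    have hn3 : (3:ℝ) ≤ n := by exact_mod_cast hn
    have hε : 0 < epsSeq H β n := Real.rpow_pos_of_pos hnpos _
    have hα : 0 < alphaRate β n := by
      apply mul_pos (Real.rpow_pos_of_pos hnpos _)
      apply Real.rpow_pos_of_pos
      apply Real.log_pos
      linarith
    have hratio : C * epsSeq H β n ^ (1 - (H + 1) / 2) / alphaRate β n ≤
        C * (n:ℝ) ^ (-θ) := by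
      have hlog : 1 ≤ Real.log n := by
        rw [Real.le_log_iff_exp_le hnpos]
        calc rexp 1 ≤ 2.7182818286 := Real.exp_one_lt_d9.le
        _ ≤ 3 := by norm_num
        _ ≤ n := hn3
      have hlog52 : 1 ≤ Real.log n ^ ((5:ℝ) / 2) := by
        calc (1:ℝ) = 1 ^ ((5:ℝ) / 2) := (Real.one_rpow _).symm
        _ ≤ Real.log n ^ ((5:ℝ) / 2) :=
            Real.rpow_le_rpow zero_le_one hlog (by norm_num)
      have heps : epsSeq H β n ^ (1 - (H + 1) / 2) =
          (n:ℝ) ^ (-(β * (1 - H) / (2 - H))) := by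
        rw [epsSeq, ← Real.rpow_mul hnpos.le]
        congr 1
        have h1 : (1:ℝ) - H / 2 ≠ 0 := hcH.ne'
        field_simp
        ring
      rw [heps, alphaRate, div_mul_eq_div_div]
      have h1 : C * (n:ℝ) ^ (-(β * (1 - H) / (2 - H))) / (n:ℝ) ^ (-(1 / 2 - β)) =
          C * (n:ℝ) ^ (-θ) := by
        rw [mul_div_assoc, ← Real.rpow_sub hnpos]
        congr 2
        rw [hθ_def]
        ring
      rw [h1]
      exact div_le_self (by positivity) hlog52
    have h2 : (C * epsSeq H β n ^ (1 - (H + 1) / 2) / alphaRate β n) ^ p ≤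
        (C * (n:ℝ) ^ (-θ)) ^ p :=
      Real.rpow_le_rpow (by positivity) hratio hp0
    have h3 : (C * (n:ℝ) ^ (-θ)) ^ p = C ^ p * (n:ℝ) ^ (-(θ * p)) := by
      rw [Real.mul_rpow hC.le (Real.rpow_nonneg hnpos.le _), ← Real.rpow_mul hnpos.le]
      congr 2
      ring
    rw [Real.norm_eq_abs, Real.norm_eq_abs, abs_of_nonneg ENNReal.toReal_nonneg,
      abs_of_nonneg (Real.rpow_nonneg hnpos.le _)]
    calc (P {ω | alphaRate β n < ⨆ s ∈ Icc (0 : ℝ) T,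
          |∫ u in (-(epsSeq H β n))..(0 : ℝ),
            kdf H s (1 / u) * (u ^ 3)⁻¹ * B3 B u ω|}).toReal
        ≤ (Mgauss p).toReal *
            (C * epsSeq H β n ^ (1 - (H + 1) / 2) / alphaRate β n) ^ p := key n hn2
      _ ≤ (Mgauss p).toReal * (C * (n:ℝ) ^ (-θ)) ^ p :=
          mul_le_mul_of_nonneg_left h2 ENNReal.toReal_nonneg
      _ = (Mgauss p).toReal * C ^ p * (n:ℝ) ^ (-(θ * p)) := by rw [h3]; ring
  have hO : (fun n : ℕ => (P {ω | alphaRate β n < ⨆ s ∈ Icc (0 : ℝ) T,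
      |∫ u in (-(epsSeq H β n))..(0 : ℝ),
        kdf H s (1 / u) * (u ^ 3)⁻¹ * B3 B u ω|}).toReal) =O[atTop]
      fun n : ℕ => (n:ℝ) ^ (-(θ * p)) :=
    Asymptotics.IsBigO.of_bound _ hbig
  have hlo : (fun n : ℕ => (n:ℝ) ^ (-(θ * p))) =o[atTop]
      fun n : ℕ => (n:ℝ) ^ (-q) := by
    refine Asymptotics.isLittleO_of_tendsto' ?_ ?_
    · filter_upwards [eventually_ge_atTop 1] with n hn h0
      have hnpos : (0:ℝ) < n := by
        have : (1:ℝ) ≤ n := by exact_mod_cast hn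
        linarith
      exact absurd h0 (Real.rpow_pos_of_pos hnpos _).ne'
    · have h1 : Tendsto (fun x : ℝ => x ^ (-(θ * p - q))) atTop (nhds 0) :=
        tendsto_rpow_neg_atTop (by linarith)
      have h2 := h1.comp tendsto_natCast_atTop_atTop (α := ℕ)
      apply Tendsto.congr' _ h2
      filter_upwards [eventually_ge_atTop 1] with n hn
      have hnpos : (0:ℝ) < n := by
        have : (1:ℝ) ≤ n := by exact_mod_cast hn
        linarith
      show ((n:ℝ)) ^ (-(θ * p - q)) = (n:ℝ) ^ (-(θ * p)) / (n:ℝ) ^ (-q)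
      rw [show -(θ * p - q) = -(θ * p) - -q by ring, Real.rpow_sub hnpos]
  exact hO.trans_isLittleO hlo
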